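/- Let Ψ be a vector in the bipartite Hilbert space H = EuclideanSpace ℂ (Fin m × Fin n). Then the supremum over pairs of unit vectors a ∈ EuclideanSpace ℂ (Fin m), b ∈ EuclideanSpace ℂ (Fin n) of |⟨a⊗b, Ψ⟩|² equals the supremum over single unit vectors a of Σ_{k ∈ Fin n} |⟨a⊗e_k, Ψ⟩|², where e_k is the k-th standard basis vector. (Theorem of cascaded structures: the maximal separability eigenvalue of |Ψ⟩⟨Ψ| equals that of its partial trace over the second subsystem.) -/

import Mathlib

open scoped ComplexInnerProductSpace

/-- The product vector `a ⊗ b` in the bipartite space, `(a ⊗ b)(i, k) = a i * b k`. -/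
noncomputable def tp {m n : ℕ} (a : EuclideanSpace ℂ (Fin m)) (b : EuclideanSpace ℂ (Fin n)) :
    EuclideanSpace ℂ (Fin m × Fin n) :=
  WithLp.toLp 2 (fun p : Fin m × Fin n => a p.1 * b p.2)

noncomputable def cvec {m n : ℕ} (Ψ : EuclideanSpace ℂ (Fin m × Fin n))
    (a : EuclideanSpace ℂ (Fin m)) : EuclideanSpace ℂ (Fin n) :=
  WithLp.toLp 2 (fun k => ⟪tp a (EuclideanSpace.single k 1), Ψ⟫)

lemma cvec_apply {m n : ℕ} (Ψ : EuclideanSpace ℂ (Fin m × Fin n))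
    (a : EuclideanSpace ℂ (Fin m)) (k : Fin n) :
    cvec Ψ a k = ∑ i : Fin m, (starRingEnd ℂ) (a i) * Ψ (i, k) := by
  simp [cvec, tp, PiLp.inner_apply, RCLike.inner_apply, Fintype.sum_prod_type,
    EuclideanSpace.single_apply, Finset.mul_sum, mul_ite, apply_ite, Finset.sum_ite_eq',
    Finset.mem_univ, if_true, mul_comm]

lemma inner_tp {m n : ℕ} (Ψ : EuclideanSpace ℂ (Fin m × Fin n))
    (a : EuclideanSpace ℂ (Fin m)) (b : EuclideanSpace ℂ (Fin n)) :
    ⟪tp a b, Ψ⟫ = ⟪b, cvec Ψ a⟫ := by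
  simp only [PiLp.inner_apply, RCLike.inner_apply, cvec_apply, tp, Fintype.sum_prod_type,
    Finset.mul_sum]
  rw [Finset.sum_comm]
  congr 1; ext k; rw [Finset.sum_mul]; congr 1; ext i
  simp [map_mul]; ring

lemma sum_sq_cvec {m n : ℕ} (Ψ : EuclideanSpace ℂ (Fin m × Fin n))
    (a : EuclideanSpace ℂ (Fin m)) :
    ∑ k : Fin n, ‖⟪tp a (EuclideanSpace.single k 1), Ψ⟫‖ ^ 2 = ‖cvec Ψ a‖ ^ 2 := by
  rw [PiLp.norm_sq_eq_of_L2]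
  rfl

lemma cvec_bound {m n : ℕ} (Ψ : EuclideanSpace ℂ (Fin m × Fin n))
    (a : EuclideanSpace ℂ (Fin m)) (ha : ‖a‖ = 1) :
    ‖cvec Ψ a‖ ^ 2 ≤ ‖Ψ‖ ^ 2 := by
  have h1 : ∀ k : Fin n, ‖cvec Ψ a k‖ ^ 2 ≤ ∑ i : Fin m, ‖Ψ (i, k)‖ ^ 2 := by
    intro k
    set v : EuclideanSpace ℂ (Fin m) := WithLp.toLp 2 (fun i => Ψ (i, k)) with hv
    have h2 : cvec Ψ a k = ⟪a, v⟫ := by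
      rw [cvec_apply]
      simp [hv, PiLp.inner_apply, RCLike.inner_apply, mul_comm]
    have h3 : ‖v‖ ^ 2 = ∑ i : Fin m, ‖Ψ (i, k)‖ ^ 2 := PiLp.norm_sq_eq_of_L2 _ v
    rw [h2, ← h3]
    have h4 : ‖⟪a, v⟫‖ ≤ ‖a‖ * ‖v‖ := norm_inner_le_norm a v
    rw [ha, one_mul] at h4
    exact pow_le_pow_left₀ (norm_nonneg _) h4 2
  calc ‖cvec Ψ a‖ ^ 2 = ∑ k : Fin n, ‖cvec Ψ a k‖ ^ 2 := PiLp.norm_sq_eq_of_L2 _ _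
    _ ≤ ∑ k : Fin n, ∑ i : Fin m, ‖Ψ (i, k)‖ ^ 2 := Finset.sum_le_sum fun k _ => h1 k
    _ = ‖Ψ‖ ^ 2 := by
        rw [PiLp.norm_sq_eq_of_L2, Fintype.sum_prod_type, Finset.sum_comm]

lemma attain {m n : ℕ} (hn : 1 ≤ n) (Ψ : EuclideanSpace ℂ (Fin m × Fin n))
    (a : EuclideanSpace ℂ (Fin m)) :
    ∃ b : EuclideanSpace ℂ (Fin n), ‖b‖ = 1 ∧ ‖⟪tp a b, Ψ⟫‖ ^ 2 = ‖cvec Ψ a‖ ^ 2 := by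
  by_cases hc : cvec Ψ a = 0
  · refine ⟨EuclideanSpace.single ⟨0, hn⟩ 1, by simp, ?_⟩
    rw [inner_tp, hc]
    simp
  · refine ⟨(↑‖cvec Ψ a‖⁻¹ : ℂ) • cvec Ψ a, ?_, ?_⟩
    · rw [norm_smul]
      simp [norm_inv, inv_mul_cancel₀ (norm_ne_zero_iff.mpr hc)]
    · have hne : ‖cvec Ψ a‖ ≠ 0 := norm_ne_zero_iff.mpr hc
      rw [inner_tp, inner_smul_left, norm_mul, RCLike.norm_conj]
      have h6 : ‖⟪cvec Ψ a, cvec Ψ a⟫‖ = ‖cvec Ψ a‖ ^ 2 := by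
        rw [inner_self_eq_norm_sq_to_K]
        rw [norm_pow]
        norm_num
      rw [h6]
      have h7 : ‖(↑‖cvec Ψ a‖⁻¹ : ℂ)‖ = ‖cvec Ψ a‖⁻¹ := by
        rw [Complex.norm_real]
        exact abs_of_nonneg (by positivity)
      rw [h7]
      field_simp

/-- **Theorem of cascaded structures** (rank-one case): for a vector `Ψ` in the bipartite
space, the supremum over pairs of unit vectors `a, b` of `|⟨a⊗b, Ψ⟩|²` equals the supremum
over single unit vectors `a` of `Σ_k |⟨a⊗e_k, Ψ⟩|²`; i.e. the maximal separability
eigenvalue of `|Ψ⟩⟨Ψ|` equals that of its partial trace over the second subsystem. -/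
theorem cascaded_structure {m n : ℕ} (hm : 1 ≤ m) (hn : 1 ≤ n)
    (Ψ : EuclideanSpace ℂ (Fin m × Fin n)) :
    sSup {r : ℝ | ∃ (a : EuclideanSpace ℂ (Fin m)) (b : EuclideanSpace ℂ (Fin n)),
        ‖a‖ = 1 ∧ ‖b‖ = 1 ∧ r = ‖⟪tp a b, Ψ⟫‖ ^ 2}
      = sSup {r : ℝ | ∃ a : EuclideanSpace ℂ (Fin m), ‖a‖ = 1 ∧
          r = ∑ k : Fin n, ‖⟪tp a (EuclideanSpace.single k 1), Ψ⟫‖ ^ 2} := by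
  set S := {r : ℝ | ∃ (a : EuclideanSpace ℂ (Fin m)) (b : EuclideanSpace ℂ (Fin n)),
        ‖a‖ = 1 ∧ ‖b‖ = 1 ∧ r = ‖⟪tp a b, Ψ⟫‖ ^ 2} with hS
  set T := {r : ℝ | ∃ a : EuclideanSpace ℂ (Fin m), ‖a‖ = 1 ∧
          r = ∑ k : Fin n, ‖⟪tp a (EuclideanSpace.single k 1), Ψ⟫‖ ^ 2} with hT
  have hTS : T ⊆ S := by
    rintro r ⟨a, ha, rfl⟩
    obtain ⟨b, hb, hab⟩ := attain hn Ψ a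
    exact ⟨a, b, ha, hb, by rw [hab, sum_sq_cvec]⟩
  have hTbdd : ∀ r ∈ T, r ≤ ‖Ψ‖ ^ 2 := by
    rintro r ⟨a, ha, rfl⟩
    rw [sum_sq_cvec]
    exact cvec_bound Ψ a ha
  have hTne : T.Nonempty := by
    have ha : ‖(EuclideanSpace.single (⟨0, hm⟩ : Fin m) (1 : ℂ))‖ = 1 := by simp
    exact ⟨_, ⟨_, ha, rfl⟩⟩
  have hSbdd : BddAbove S := by
    refine ⟨‖Ψ‖ ^ 2, ?_⟩
    rintro r ⟨a, b, ha, hb, rfl⟩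
    have hle : ‖⟪tp a b, Ψ⟫‖ ^ 2 ≤ ‖cvec Ψ a‖ ^ 2 := by
      rw [inner_tp]
      have := norm_inner_le_norm (𝕜 := ℂ) b (cvec Ψ a)
      rw [hb, one_mul] at this
      exact pow_le_pow_left₀ (norm_nonneg _) this 2
    exact hle.trans (cvec_bound Ψ a ha)
  refine le_antisymm ?_ (csSup_le_csSup hSbdd hTne hTS)
  refine csSup_le (hTne.mono hTS) ?_
  rintro r ⟨a, b, ha, hb, rfl⟩
  have hle : ‖⟪tp a b, Ψ⟫‖ ^ 2 ≤ ‖cvec Ψ a‖ ^ 2 := by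
    rw [inner_tp]
    have := norm_inner_le_norm (𝕜 := ℂ) b (cvec Ψ a)
    rw [hb, one_mul] at this
    exact pow_le_pow_left₀ (norm_nonneg _) this 2
  refine hle.trans (le_csSup ⟨‖Ψ‖ ^ 2, fun x hx => hTbdd x hx⟩ ?_)
  exact ⟨a, ha, (sum_sq_cvec Ψ a).symm⟩
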